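/- Let E be an oriented n-dimensional real inner product space, k + p = n with k > 0, p > 0, let λ_1, …, λ_p be real numbers, and let {v_1, …, v_k, w_1, …, w_p} be a basis of E. Then the system ⟨u, v_1⟩ = ⋯ = ⟨u, v_k⟩ = 0, ⟨u, w_i⟩ = λ_i (1 ≤ i ≤ p) has a unique solution, namely u_0 = ‖(⋀_{i=1}^p w_i) ∧ (⋀_{j=1}^k v_j)‖_n^{−2} Σ_{i=1}^p (−1)^{n−i} λ_i Θ_i, where Θ_i = ⋆[ (⋀_{j≠i} w_j) ∧ (⋀_{l=1}^k v_l) ∧ ⋆( (⋀_{j=1}^p w_j) ∧ (⋀_{l=1}^k v_l) ) ]. -/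

import Mathlib

noncomputable section

open ExteriorAlgebra Module

/-- The data of the induced inner ℝ products on the exterior powers of an oriented
`n`-dimensional real inner ℝ product space `E`, together with the Hodge star operators,
characterized by their defining properties. -/
structure HodgeData (E : Type*) [NormedAddCommGroup E] [InnerProductSpace ℝ E] (n : ℕ) where
  /-- an orthonormal basis fixing the orientation -/
  e : OrthonormalBasis (Fin n) ℝ E
  /-- the induced inner ℝ product on the exterior algebra (degreewise, the inner ℝ product
  `⟨·,·⟩_p` on `Λ^p E`) -/
  B : ExteriorAlgebra ℝ E →ₗ[ℝ] ExteriorAlgebra ℝ E →ₗ[ℝ] ℝ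
  B_symm : ∀ x y, B x y = B y x
  /-- on decomposable `p`-vectors, the inner ℝ product is the Gram determinant -/
  B_gram : ∀ (p : ℕ) (v w : Fin p → E),
    B (ExteriorAlgebra.ιMulti ℝ p v) (ExteriorAlgebra.ιMulti ℝ p w)
      = (Matrix.of fun i j => (inner ℝ (v i) (w j) : ℝ)).det
  /-- the Hodge star operator `⋆ : Λ^p E → Λ^{n-p} E` (for each `p`) -/
  star : ℕ → ExteriorAlgebra ℝ E →ₗ[ℝ] ExteriorAlgebra ℝ E
  star_mem : ∀ (p : ℕ) (ν : ExteriorAlgebra ℝ E), ν ∈ ⋀[ℝ]^p E →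
    star p ν ∈ ⋀[ℝ]^(n - p) E
  /-- the defining property of the Hodge star: `⟨⋆ν, ω⟩ μ = ν ∧ ω` where
  `μ = e_1 ∧ ⋯ ∧ e_n` is the unit volume element -/
  star_eq : ∀ (p : ℕ) (ν ω : ExteriorAlgebra ℝ E), ν ∈ ⋀[ℝ]^p E → ω ∈ ⋀[ℝ]^(n - p) E →
    (B (star p ν) ω) • (ExteriorAlgebra.ιMulti ℝ n ⇑e) = ν * ω

namespace HodgeData

variable {E : Type*} [NormedAddCommGroup E] [InnerProductSpace ℝ E] {n : ℕ}

/-- the unit volume element `μ = e_1 ∧ ⋯ ∧ e_n` -/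
def vol (H : HodgeData E n) : ExteriorAlgebra ℝ E := ExteriorAlgebra.ιMulti ℝ n ⇑H.e

/-- the norm on the exterior powers induced by the inner ℝ product -/
def norm (H : HodgeData E n) (x : ExteriorAlgebra ℝ E) : ℝ := Real.sqrt (H.B x x)

end HodgeData
section AuxLemmas
variable {E : Type*} [NormedAddCommGroup E] [InnerProductSpace ℝ E]

lemma iM_one (x : E) : ExteriorAlgebra.ιMulti ℝ 1 ![x] = ExteriorAlgebra.ι ℝ x := by
  simp [ExteriorAlgebra.ιMulti_apply]

lemma iM_cast {p p' : ℕ} (h : p = p') (f : Fin p' → E) :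
    ExteriorAlgebra.ιMulti ℝ p (f ∘ Fin.cast h) = ExteriorAlgebra.ιMulti ℝ p' f := by
  subst h; rfl

lemma iM_prod (p r : ℕ) (f : Fin p → E) (g : Fin r → E) :
    ExteriorAlgebra.ιMulti ℝ p f * ExteriorAlgebra.ιMulti ℝ r g
      = ExteriorAlgebra.ιMulti ℝ (p + r) (Fin.append f g) := by
  have hfun : (Fin.append (fun i => ExteriorAlgebra.ι ℝ (f i)) fun i => ExteriorAlgebra.ι ℝ (g i))
      = fun i => ExteriorAlgebra.ι ℝ (Fin.append f g i) := by
    funext i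
    refine Fin.addCases (fun i => ?_) (fun i => ?_) i <;>
      simp [Fin.append_left, Fin.append_right]
  simp only [ExteriorAlgebra.ιMulti_apply, ← List.prod_append, ← List.ofFn_fin_append, hfun]

lemma iM_mul_ι (p : ℕ) (f : Fin p → E) (x : E) :
    ExteriorAlgebra.ιMulti ℝ p f * ExteriorAlgebra.ι ℝ x
      = ((-1 : ℝ) ^ p) • (ExteriorAlgebra.ι ℝ x * ExteriorAlgebra.ιMulti ℝ p f) := by
  induction p with
  | zero => simp
  | succ p ih =>
    have hswap : ExteriorAlgebra.ι ℝ (f 0) * ExteriorAlgebra.ι ℝ x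
        = -(ExteriorAlgebra.ι ℝ x * ExteriorAlgebra.ι ℝ (f 0)) := by
      have := ExteriorAlgebra.ι_add_mul_swap (R := ℝ) (f 0) x
      linear_combination (norm := noncomm_ring) this
    rw [ExteriorAlgebra.ιMulti_succ_apply, mul_assoc, ih, mul_smul_comm, ← mul_assoc,
      hswap, pow_succ]
    rw [mul_neg_one, neg_smul]
    rw [neg_mul, smul_neg, mul_assoc]

lemma iM_insert : ∀ (m : ℕ) (f : Fin (m + 1) → E) (i : Fin (m + 1)),
    ExteriorAlgebra.ιMulti ℝ m (f ∘ i.succAbove) * ExteriorAlgebra.ι ℝ (f i)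
      = ((-1 : ℝ) ^ (m - (i : ℕ))) • ExteriorAlgebra.ιMulti ℝ (m + 1) f := by
  intro m
  induction m with
  | zero =>
    intro f i
    have hi : i = 0 := Fin.fin_one_eq_zero i
    subst hi
    simp [ExteriorAlgebra.ιMulti_succ_apply]
  | succ m ih =>
    intro f i
    refine Fin.cases ?_ (fun j => ?_) i
    · rw [Fin.succAbove_zero, iM_mul_ι, ExteriorAlgebra.ιMulti_succ_apply]
      norm_num
      rfl
    · have h0 : (f ∘ (j.succ).succAbove) 0 = f 0 := by
        simp [Function.comp]
      have htail : Matrix.vecTail (f ∘ (j.succ).succAbove)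
          = (f ∘ Fin.succ) ∘ j.succAbove := by
        funext a
        simp [Matrix.vecTail, Function.comp, Fin.succ_succAbove_succ]
      have ihj := ih (f ∘ Fin.succ) j
      simp only [Function.comp_apply] at ihj
      rw [ExteriorAlgebra.ιMulti_succ_apply, h0, htail, mul_assoc,
        ihj, mul_smul_comm,
        show (f ∘ Fin.succ) = Matrix.vecTail f from rfl,
        ← ExteriorAlgebra.ιMulti_succ_apply]
      congr 2
      simp [Fin.val_succ]

lemma extPow_zero : (⋀[ℝ]^0 E : Submodule ℝ (ExteriorAlgebra ℝ E)) = 1 := pow_zero _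

lemma extPow_one : (⋀[ℝ]^1 E : Submodule ℝ (ExteriorAlgebra ℝ E))
    = LinearMap.range (ExteriorAlgebra.ι ℝ : E →ₗ[ℝ] ExteriorAlgebra ℝ E) := pow_one _

end AuxLemmas

set_option maxHeartbeats 2000000 in
/-- The case k + p = n: the system has a unique solution u₀ given by the explicit
formula. Here p = q + 1 > 0, k > 0, and dim E = n = k + (q + 1). -/
theorem stmt13 {E : Type*} [NormedAddCommGroup E] [InnerProductSpace ℝ E] (k q : ℕ)
    (hk : 0 < k) (H : HodgeData E (k + (q + 1)))
    (lam : Fin (q + 1) → ℝ)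
    (v : Fin k → E) (w : Fin (q + 1) → E)
    (hindep : LinearIndependent ℝ (Fin.append w v))
    (hspan : Submodule.span ℝ (Set.range (Fin.append w v)) = ⊤)
    (W : ExteriorAlgebra ℝ E)
    (hW : W = ExteriorAlgebra.ιMulti ℝ (q + 1 + k) (Fin.append w v))
    (Θ : Fin (q + 1) → ExteriorAlgebra ℝ E)
    (hΘ : ∀ i, Θ i = H.star (k + (q + 1) - 1)
      (ExteriorAlgebra.ιMulti ℝ (q + k)
          (Fin.append (fun j => w (i.succAbove j)) v)
        * H.star (k + (q + 1)) W)) :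
    ∀ u : E,
      ((∀ j, (inner ℝ u (v j) : ℝ) = 0) ∧ ∀ i, (inner ℝ u (w i) : ℝ) = lam i) ↔
        ExteriorAlgebra.ι ℝ u = (H.norm W ^ 2)⁻¹ •
          ∑ i : Fin (q + 1),
            (((-1 : ℝ)) ^ (k + (q + 1) - ((i : ℕ) + 1)) * lam i) • Θ i := by
  classical
  have hqk : k + (q + 1) = q + 1 + k := by omega
  set μ : ExteriorAlgebra ℝ E := ExteriorAlgebra.ιMulti ℝ (k + (q + 1)) ⇑H.e with hμ
  have hB1 : ∀ x y : E, H.B (ExteriorAlgebra.ι ℝ x) (ExteriorAlgebra.ι ℝ y)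
      = (inner ℝ x y : ℝ) := by
    intro x y
    have h := H.B_gram 1 ![x] ![y]
    rw [iM_one, iM_one] at h
    rw [h, Matrix.det_fin_one]
    simp
  have hBμμ : H.B μ μ = 1 := by
    have hM : (Matrix.of fun i j => (inner ℝ (H.e i) (H.e j) : ℝ))
        = (1 : Matrix (Fin (k + (q + 1))) (Fin (k + (q + 1))) ℝ) := by
      ext i j
      simp [Matrix.one_apply, orthonormal_iff_ite.mp H.e.orthonormal i j]
    rw [hμ, H.B_gram, hM, Matrix.det_one]
  have hμne : μ ≠ 0 := by
    intro h
    rw [h] at hBμμ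
    simp at hBμμ
  have hcancel : ∀ a b : ℝ, a • μ = b • μ → a = b := by
    intro a b hab
    have h2 : (a - b) • μ = 0 := by rw [sub_smul, hab, sub_self]
    rcases smul_eq_zero.mp h2 with h | h
    · linarith [sub_eq_zero.mp (by linarith [h] : a - b = (0:ℝ))]
    · exact absurd h hμne
  have hmem : ∀ (p : ℕ) (f : Fin p → E),
      ExteriorAlgebra.ιMulti ℝ p f ∈ ⋀[ℝ]^p E :=
    fun p f => ExteriorAlgebra.ιMulti_range ℝ p ⟨f, rfl⟩
  have hW2 : W = ExteriorAlgebra.ιMulti ℝ (k + (q + 1)) (Fin.append w v ∘ Fin.cast hqk) := by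
    rw [hW, iM_cast]
  have hWmem : W ∈ ⋀[ℝ]^(k + (q + 1)) E := hW2 ▸ hmem _ _
  have hsW0 : H.star (k + (q + 1)) W ∈ (1 : Submodule ℝ (ExteriorAlgebra ℝ E)) := by
    have h := H.star_mem _ W hWmem
    rwa [Nat.sub_self, extPow_zero] at h
  obtain ⟨c, hc⟩ := Submodule.mem_one.mp hsW0
  have h1mem : (1 : ExteriorAlgebra ℝ E) ∈ ⋀[ℝ]^(k + (q + 1) - (k + (q + 1))) E := by
    rw [Nat.sub_self, extPow_zero]
    exact Submodule.mem_one.mpr ⟨1, map_one _⟩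
  have hB11 : H.B 1 1 = 1 := by
    have h := H.B_gram 0 (fun i => i.elim0) (fun i => i.elim0)
    rw [ExteriorAlgebra.ιMulti_zero_apply] at h
    rw [h, Matrix.det_fin_zero]
  have hBsW : H.B (H.star (k + (q + 1)) W) 1 = c := by
    rw [← hc, Algebra.algebraMap_eq_smul_one, map_smul, LinearMap.smul_apply,
      smul_eq_mul, hB11, mul_one]
  have hWc : W = c • μ := by
    have h := H.star_eq (k + (q + 1)) W 1 hWmem h1mem
    rw [mul_one, hBsW] at h
    exact h.symm
  have hBWW : H.B W W = c * c := by
    simp only [hWc, map_smul, LinearMap.smul_apply, smul_eq_mul, hBμμ]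
    ring
  -- Gram determinant: B W W ≠ 0
  have hcne : c ≠ 0 := by
    intro h0
    let fB : Basis (Fin (q + 1 + k)) ℝ E := Basis.mk hindep hspan.ge
    let gB : Basis (Fin (k + (q + 1))) ℝ E := fB.reindex (finCongr hqk.symm)
    have hgB : ∀ i, gB i = (Fin.append w v ∘ Fin.cast hqk) i := by
      intro i
      simp only [gB, fB, Basis.reindex_apply, Basis.coe_mk, Function.comp_apply]
      congr 1
    have hdetA : (H.e.toBasis.toMatrix ⇑gB).det ≠ 0 := by
      have h1 := H.e.toBasis.isUnit_det gB
      rw [Basis.det_apply] at h1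
      exact h1.ne_zero
    have hGram : H.B W W
        = (H.e.toBasis.toMatrix ⇑gB).det * (H.e.toBasis.toMatrix ⇑gB).det := by
      rw [hW2, H.B_gram]
      have hM : (Matrix.of fun i j => (inner ℝ ((Fin.append w v ∘ Fin.cast hqk) i)
            ((Fin.append w v ∘ Fin.cast hqk) j) : ℝ))
          = (H.e.toBasis.toMatrix ⇑gB).transpose * (H.e.toBasis.toMatrix ⇑gB) := by
        ext i j
        rw [Matrix.mul_apply]
        simp only [Matrix.of_apply, Matrix.transpose_apply, Basis.toMatrix_apply,
          OrthonormalBasis.coe_toBasis_repr_apply, OrthonormalBasis.repr_apply_apply,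
          hgB]
        calc (inner ℝ ((Fin.append w v ∘ Fin.cast hqk) i)
              ((Fin.append w v ∘ Fin.cast hqk) j) : ℝ)
            = ∑ m, (inner ℝ ((Fin.append w v ∘ Fin.cast hqk) i) (H.e m) : ℝ)
              * (inner ℝ (H.e m) ((Fin.append w v ∘ Fin.cast hqk) j) : ℝ) :=
              (H.e.sum_inner_mul_inner _ _).symm
          _ = _ := by
              refine Finset.sum_congr rfl fun m _ => ?_
              rw [real_inner_comm]
      rw [hM, Matrix.det_mul, Matrix.det_transpose]
    rw [hBWW, h0, mul_zero] at hGram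
    exact hdetA (by nlinarith [hGram])
  -- the Θ i
  have hp' : k + (q + 1) - 1 = q + k := by omega
  have hνmem : ∀ i : Fin (q + 1),
      ExteriorAlgebra.ιMulti ℝ (q + k) (Fin.append (fun j => w (i.succAbove j)) v)
        ∈ ⋀[ℝ]^(k + (q + 1) - 1) E := by
    intro i
    rw [hp']
    exact hmem _ _
  have hsub1 : k + (q + 1) - (k + (q + 1) - 1) = 1 := by omega
  have hι1mem : ∀ x : E,
      ExteriorAlgebra.ι ℝ x ∈ ⋀[ℝ]^(k + (q + 1) - (k + (q + 1) - 1)) E := by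
    intro x
    rw [hsub1, extPow_one]
    exact LinearMap.mem_range_self _ _
  have hΘ2 : ∀ i, Θ i = c • H.star (k + (q + 1) - 1)
      (ExteriorAlgebra.ιMulti ℝ (q + k) (Fin.append (fun j => w (i.succAbove j)) v)) := by
    intro i
    rw [hΘ i, ← hc, ← Algebra.commutes, ← Algebra.smul_def, map_smul]
  have hkey : ∀ (i : Fin (q + 1)) (x : E),
      (H.B (Θ i) (ExteriorAlgebra.ι ℝ x)) • μ
        = c • (ExteriorAlgebra.ιMulti ℝ (q + k)
            (Fin.append (fun j => w (i.succAbove j)) v) * ExteriorAlgebra.ι ℝ x) := by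
    intro i x
    have h := H.star_eq (k + (q + 1) - 1) _ (ExteriorAlgebra.ι ℝ x) (hνmem i) (hι1mem x)
    rw [← hμ] at h
    rw [hΘ2 i, map_smul, LinearMap.smul_apply, smul_eq_mul, mul_smul, h]
  -- products
  have hprod0v : ∀ (i : Fin (q + 1)) (j : Fin k),
      ExteriorAlgebra.ιMulti ℝ (q + k) (Fin.append (fun j' => w (i.succAbove j')) v)
        * ExteriorAlgebra.ι ℝ (v j) = 0 := by
    intro i j
    rw [← iM_one, iM_prod]
    refine AlternatingMap.map_eq_zero_of_eq _ _
      (i := Fin.castAdd 1 (Fin.natAdd q j)) (j := Fin.natAdd (q + k) 0) ?_ ?_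
    · simp [Fin.append_left, Fin.append_right]
    · simp [Fin.ext_iff]
      omega
  have hprod0w : ∀ (i m : Fin (q + 1)), m ≠ i →
      ExteriorAlgebra.ιMulti ℝ (q + k) (Fin.append (fun j' => w (i.succAbove j')) v)
        * ExteriorAlgebra.ι ℝ (w m) = 0 := by
    intro i m hmi
    obtain ⟨z, hz⟩ := Fin.exists_succAbove_eq hmi
    rw [← iM_one, iM_prod]
    refine AlternatingMap.map_eq_zero_of_eq _ _
      (i := Fin.castAdd 1 (Fin.castAdd k z)) (j := Fin.natAdd (q + k) 0) ?_ ?_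
    · simp [Fin.append_left, Fin.append_right, hz]
    · simp [Fin.ext_iff]
      omega
  have hprodwi : ∀ i : Fin (q + 1),
      ExteriorAlgebra.ιMulti ℝ (q + k) (Fin.append (fun j => w (i.succAbove j)) v)
        * ExteriorAlgebra.ι ℝ (w i)
        = ((-1 : ℝ) ^ (k + (q - (i : ℕ))))
            • ExteriorAlgebra.ιMulti ℝ (q + 1 + k) (Fin.append w v) := by
    intro i
    have hins := iM_insert q w i
    simp only [Function.comp_def] at hins
    rw [← iM_prod, mul_assoc, iM_mul_ι, mul_smul_comm, ← mul_assoc, hins,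
      smul_mul_assoc, smul_smul, ← pow_add, iM_prod]
  have hBΘv : ∀ i j, H.B (Θ i) (ExteriorAlgebra.ι ℝ (v j)) = 0 := by
    intro i j
    refine hcancel _ 0 ?_
    rw [hkey i (v j), hprod0v i j, smul_zero, zero_smul]
  have hBΘwne : ∀ i m, m ≠ i → H.B (Θ i) (ExteriorAlgebra.ι ℝ (w m)) = 0 := by
    intro i m hmi
    refine hcancel _ 0 ?_
    rw [hkey i (w m), hprod0w i m hmi, smul_zero, zero_smul]
  have hBΘw : ∀ i, H.B (Θ i) (ExteriorAlgebra.ι ℝ (w i))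
      = (-1 : ℝ) ^ (k + (q - (i : ℕ))) * (c * c) := by
    intro i
    refine hcancel _ _ ?_
    rw [hkey i (w i), hprodwi i, ← hW, hWc, smul_smul, smul_smul]
    congr 1
    ring
  -- choose representatives θ i with ι (θ i) = Θ i
  have hθex : ∀ i, ∃ y : E, ExteriorAlgebra.ι ℝ y = Θ i := by
    intro i
    have h1 := H.star_mem (k + (q + 1) - 1) _ (hνmem i)
    rw [hsub1, extPow_one] at h1
    obtain ⟨y, hy⟩ := h1
    exact ⟨c • y, by rw [map_smul, hy, ← hΘ2 i]⟩
  choose θ hθ using hθex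
  have hnormsq : H.norm W ^ 2 = c * c := by
    rw [HodgeData.norm, Real.sq_sqrt (by rw [hBWW]; exact mul_self_nonneg c), hBWW]
  set u₀ : E := (c * c)⁻¹ • ∑ i : Fin (q + 1),
      (((-1 : ℝ)) ^ (k + (q + 1) - ((i : ℕ) + 1)) * lam i) • θ i with hu₀
  have hιu₀ : ExteriorAlgebra.ι ℝ u₀ = (H.norm W ^ 2)⁻¹ •
      ∑ i : Fin (q + 1),
        (((-1 : ℝ)) ^ (k + (q + 1) - ((i : ℕ) + 1)) * lam i) • Θ i := by
    rw [hu₀, map_smul, map_sum, hnormsq]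
    congr 1
    refine Finset.sum_congr rfl fun i _ => ?_
    rw [map_smul, hθ i]
  have hinner : ∀ x : E, (inner ℝ u₀ x : ℝ) = (c * c)⁻¹ *
      ∑ i : Fin (q + 1), ((-1 : ℝ) ^ (k + (q + 1) - ((i : ℕ) + 1)) * lam i)
        * H.B (Θ i) (ExteriorAlgebra.ι ℝ x) := by
    intro x
    rw [hu₀, real_inner_smul_left, sum_inner]
    congr 1
    refine Finset.sum_congr rfl fun i _ => ?_
    rw [real_inner_smul_left, ← hB1, hθ i]
  have hcondv : ∀ j, (inner ℝ u₀ (v j) : ℝ) = 0 := by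
    intro j
    rw [hinner]
    simp [hBΘv]
  have hcondw : ∀ m, (inner ℝ u₀ (w m) : ℝ) = lam m := by
    intro m
    rw [hinner, Finset.sum_eq_single m]
    · rw [hBΘw m]
      have hexp : k + (q + 1) - ((m : ℕ) + 1) = k + (q - (m : ℕ)) := by
        have := m.isLt
        omega
      rw [hexp]
      have hsq : (-1 : ℝ) ^ (k + (q - (m : ℕ))) * (-1 : ℝ) ^ (k + (q - (m : ℕ))) = 1 := by
        rw [← pow_add]
        exact Even.neg_one_pow ⟨_, rfl⟩
      have hcc : (c * c) ≠ 0 := mul_ne_zero hcne hcne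
      calc (c * c)⁻¹ * ((-1 : ℝ) ^ (k + (q - (m : ℕ))) * lam m
              * ((-1 : ℝ) ^ (k + (q - (m : ℕ))) * (c * c)))
          = ((-1 : ℝ) ^ (k + (q - (m : ℕ))) * (-1 : ℝ) ^ (k + (q - (m : ℕ))))
              * ((c * c)⁻¹ * (c * c)) * lam m := by ring
        _ = lam m := by rw [hsq, inv_mul_cancel₀ hcc]; ring
    · intro i _ hne
      rw [hBΘwne i m hne.symm, mul_zero]
    · intro h
      exact absurd (Finset.mem_univ m) h
  intro u
  have huniq : ((∀ j, (inner ℝ u (v j) : ℝ) = 0) ∧ ∀ i, (inner ℝ u (w i) : ℝ) = lam i)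
      → u = u₀ := by
    rintro ⟨h1, h2⟩
    have hdz : ∀ x : E, (inner ℝ (u - u₀) x : ℝ) = 0 := by
      intro x
      have hx : x ∈ Submodule.span ℝ (Set.range (Fin.append w v)) := by
        rw [hspan]
        exact Submodule.mem_top
      induction hx using Submodule.span_induction with
      | mem y hy =>
        obtain ⟨idx, rfl⟩ := hy
        refine Fin.addCases ?_ ?_ idx
        · intro a
          rw [Fin.append_left, inner_sub_left, h2 a, hcondw a, sub_self]
        · intro a
          rw [Fin.append_right, inner_sub_left, h1 a, hcondv a, sub_self]
      | zero => rw [inner_zero_right]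
      | add y z hy hz hpy hpz => rw [inner_add_right, hpy, hpz, add_zero]
      | smul t y hy hpy => rw [real_inner_smul_right, hpy, mul_zero]
    have hz : u - u₀ = 0 := by
      have h := hdz (u - u₀)
      rwa [inner_self_eq_zero] at h
    exact sub_eq_zero.mp hz
  constructor
  · intro hcond
    rw [huniq hcond, hιu₀]
  · intro h
    have hu : u = u₀ := by
      have : ExteriorAlgebra.ι ℝ u = ExteriorAlgebra.ι ℝ u₀ := by rw [h, hιu₀]
      exact (ExteriorAlgebra.ι_inj ℝ u u₀).mp this
    rw [hu]
    exact ⟨hcondv, hcondw⟩
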